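/- If a Γ-lattice L is quasi-invertible, then Ш²(Γ', L) = 0 for every subgroup Γ' of Γ. -/

import Mathlib

/-! Basic definitions: Γ-lattices, permutation / quasi-permutation / invertible /
quasi-invertible lattices, group cohomology via inhomogeneous cochains,
Tate–Shafarevich groups, and the lattice `J_Γ = ℤ[Γ]/ℤ`. -/

/-- A bundled additive module with an action of the group `Γ`. -/
structure GammaMod (Γ : Type) [Group Γ] : Type 1 where
  carrier : Type
  [acg : AddCommGroup carrier]
  [act : DistribMulAction Γ carrier]

attribute [instance] GammaMod.acg GammaMod.act

section Lattices

variable {Γ : Type} [Group Γ]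

/-- A permutation `Γ`-lattice: it admits a finite `ℤ`-basis permuted by `Γ`. -/
def IsPermutation (P : GammaMod Γ) : Prop :=
  ∃ (ι : Type) (_ : Fintype ι) (b : Module.Basis ι ℤ P.carrier),
    ∀ (γ : Γ) (i : ι), ∃ j, γ • (b i) = b j

/-- A `Γ`-equivariant additive map. -/
def IsEquivariant {A B : GammaMod Γ} (f : A.carrier →+ B.carrier) : Prop :=
  ∀ (γ : Γ) (x : A.carrier), f (γ • x) = γ • f x

/-- `0 → A → B → C → 0` is short exact. -/
def IsShortExact {A B C : GammaMod Γ} (f : A.carrier →+ B.carrier)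
    (g : B.carrier →+ C.carrier) : Prop :=
  Function.Injective f ∧ Function.Surjective g ∧ ∀ y, g y = 0 ↔ y ∈ Set.range f

/-- A quasi-permutation `Γ`-lattice: it fits into a short exact sequence
`0 → L → P → P' → 0` with `P`, `P'` permutation lattices. -/
def IsQuasiPermutation (L : GammaMod Γ) : Prop :=
  ∃ (P P' : GammaMod Γ), IsPermutation P ∧ IsPermutation P' ∧
    ∃ (f : L.carrier →+ P.carrier) (g : P.carrier →+ P'.carrier),
      IsEquivariant f ∧ IsEquivariant g ∧ IsShortExact f g

/-- `A` is a direct summand of `B` (equivariantly). -/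
def IsDirectSummandOf (A B : GammaMod Γ) : Prop :=
  ∃ (i : A.carrier →+ B.carrier) (r : B.carrier →+ A.carrier),
    IsEquivariant i ∧ IsEquivariant r ∧ r.comp i = AddMonoidHom.id _

/-- An invertible `Γ`-lattice: a direct summand of a permutation lattice. -/
def IsInvertibleLat (I : GammaMod Γ) : Prop :=
  ∃ P : GammaMod Γ, IsPermutation P ∧ IsDirectSummandOf I P

/-- A quasi-invertible `Γ`-lattice: a direct summand of a quasi-permutation lattice. -/
def IsQuasiInvertible (L : GammaMod Γ) : Prop :=
  ∃ Q : GammaMod Γ, IsQuasiPermutation Q ∧ IsDirectSummandOf L Q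

end Lattices

/-- The action of `G` on an invariant additive subgroup. -/
def subAction {G M : Type} [Group G] [AddCommGroup M] [DistribMulAction G M]
    (S : AddSubgroup M) (h : ∀ (g : G) (x : M), x ∈ S → g • x ∈ S) :
    DistribMulAction G S where
  smul g x := ⟨g • (x : M), h g x x.2⟩
  one_smul x := Subtype.ext (one_smul G (x : M))
  mul_smul g g' x := Subtype.ext (mul_smul g g' (x : M))
  smul_zero g := Subtype.ext (smul_zero g)
  smul_add g x y := Subtype.ext (smul_add g (x : M) (y : M))

section Cohomology

variable (G : Type) [Group G] (M : Type) [AddCommGroup M] [DistribMulAction G M]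

/-- Inhomogeneous 2-cocycle condition. -/
def IsCocycle2 (f : G → G → M) : Prop :=
  ∀ g h k : G, g • f h k + f g (h * k) = f (g * h) k + f g h

/-- Inhomogeneous 2-coboundary condition. -/
def IsCoboundary2 (f : G → G → M) : Prop :=
  ∃ φ : G → M, ∀ g h : G, f g h = g • φ h + φ g - φ (g * h)

/-- Inhomogeneous 3-cocycle condition. -/
def IsCocycle3 (f : G → G → G → M) : Prop :=
  ∀ g h k l : G,
    g • f h k l + f g (h * k) l + f g h k = f (g * h) k l + f g h (k * l)

/-- Inhomogeneous 3-coboundary condition. -/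
def IsCoboundary3 (f : G → G → G → M) : Prop :=
  ∃ φ : G → G → M, ∀ g h k : G,
    f g h k = g • φ h k - φ (g * h) k + φ g (h * k) - φ g h

/-- The subgroup of 2-cocycles. -/
def cocycles2 : AddSubgroup (G → G → M) where
  carrier := {f | IsCocycle2 G M f}
  add_mem' := by
    intro f g hf hg a b c
    have := congrArg₂ (· + ·) (hf a b c) (hg a b c)
    simp only [Pi.add_apply, smul_add]
    abel_nf at this ⊢
    exact this
  zero_mem' := by intro a b c; simp
  neg_mem' := by
    intro f hf a b c
    have := congrArg Neg.neg (hf a b c)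
    simp only [Pi.neg_apply, smul_neg]
    abel_nf at this ⊢
    exact this

/-- The subgroup of 2-coboundaries. -/
def coboundaries2 : AddSubgroup (G → G → M) where
  carrier := {f | IsCoboundary2 G M f}
  add_mem' := by
    rintro f g ⟨φ, hφ⟩ ⟨ψ, hψ⟩
    refine ⟨φ + ψ, fun a b => ?_⟩
    simp only [Pi.add_apply, smul_add, hφ a b, hψ a b]
    abel
  zero_mem' := ⟨0, by intro a b; simp⟩
  neg_mem' := by
    rintro f ⟨φ, hφ⟩
    refine ⟨-φ, fun a b => ?_⟩
    simp only [Pi.neg_apply, smul_neg, hφ a b]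
    abel

/-- The subgroup of 3-cocycles. -/
def cocycles3 : AddSubgroup (G → G → G → M) where
  carrier := {f | IsCocycle3 G M f}
  add_mem' := by
    intro f g hf hg a b c d
    have := congrArg₂ (· + ·) (hf a b c d) (hg a b c d)
    simp only [Pi.add_apply, smul_add]
    abel_nf at this ⊢
    exact this
  zero_mem' := by intro a b c d; simp
  neg_mem' := by
    intro f hf a b c d
    have := congrArg Neg.neg (hf a b c d)
    simp only [Pi.neg_apply, smul_neg]
    abel_nf at this ⊢
    exact this

/-- The subgroup of 3-coboundaries. -/
def coboundaries3 : AddSubgroup (G → G → G → M) where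
  carrier := {f | IsCoboundary3 G M f}
  add_mem' := by
    rintro f g ⟨φ, hφ⟩ ⟨ψ, hψ⟩
    refine ⟨φ + ψ, fun a b c => ?_⟩
    simp only [Pi.add_apply, smul_add, hφ a b c, hψ a b c]
    abel
  zero_mem' := ⟨0, by intro a b c; simp⟩
  neg_mem' := by
    rintro f ⟨φ, hφ⟩
    refine ⟨-φ, fun a b c => ?_⟩
    simp only [Pi.neg_apply, smul_neg, hφ a b c]
    abel

/-- Third group cohomology `H³(G, M)`, via inhomogeneous cochains. -/
abbrev H3 := cocycles3 G M ⧸ ((coboundaries3 G M).addSubgroupOf (cocycles3 G M))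

/-- The subgroup of 2-cocycles whose restriction to every cyclic subgroup is a
coboundary. -/
def shaCocycles : AddSubgroup (G → G → M) where
  carrier := {f | IsCocycle2 G M f ∧ ∀ (C : Subgroup G), IsCyclic C →
      IsCoboundary2 C M (fun a b : C => f a b)}
  add_mem' := by
    rintro f g ⟨hf1, hf2⟩ ⟨hg1, hg2⟩
    refine ⟨(cocycles2 G M).add_mem hf1 hg1, fun C hC => ?_⟩
    obtain ⟨φ, hφ⟩ := hf2 C hC
    obtain ⟨ψ, hψ⟩ := hg2 C hC
    refine ⟨φ + ψ, fun a b => ?_⟩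
    simp only [Pi.add_apply, smul_add, hφ a b, hψ a b]
    abel
  zero_mem' := by
    refine ⟨(cocycles2 G M).zero_mem, fun C hC => ⟨0, by intro a b; simp⟩⟩
  neg_mem' := by
    rintro f ⟨hf1, hf2⟩
    refine ⟨(cocycles2 G M).neg_mem hf1, fun C hC => ?_⟩
    obtain ⟨φ, hφ⟩ := hf2 C hC
    refine ⟨-φ, fun a b => ?_⟩
    simp only [Pi.neg_apply, smul_neg, hφ a b]
    abel

/-- The Tate–Shafarevich group `Ш²(G, M)`: the kernel of
`H²(G,M) → ∏_C H²(C,M)` over all cyclic subgroups `C ⊆ G`, realized as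
(locally trivial 2-cocycles) / (2-coboundaries). -/
abbrev Sha2 := shaCocycles G M ⧸ ((coboundaries2 G M).addSubgroupOf (shaCocycles G M))

end Cohomology

/-- `M` with the trivial action of `G`. -/
def TrivAct (G M : Type) : Type := M

instance (G M : Type) [AddCommGroup M] : AddCommGroup (TrivAct G M) :=
  inferInstanceAs (AddCommGroup M)

instance (G M : Type) [Group G] [AddCommGroup M] : DistribMulAction G (TrivAct G M) where
  smul _ m := m
  one_smul _ := rfl
  mul_smul _ _ _ := rfl
  smul_zero _ := rfl
  smul_add _ _ _ := rfl

section JGamma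

/-- The subgroup of `ℤ[Γ] = (Γ → ℤ)` generated by the norm element `∑_{s∈Γ} s`
(the constant function `1`). -/
def normSub (Γ : Type) : AddSubgroup (Γ → ℤ) :=
  AddSubgroup.zmultiples (fun _ => (1 : ℤ))

/-- The lattice `J_Γ = ℤ[Γ]/ℤ`, the cokernel of the norm map `ℤ → ℤ[Γ]`.
Here `ℤ[Γ]` is modelled as functions `Γ → ℤ` with `Γ` acting by left translation;
the norm element is the constant function `1`. -/
abbrev JLat (Γ : Type) := (Γ → ℤ) ⧸ normSub Γ

variable {Γ : Type} [Group Γ]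

/-- Left translation on `ℤ[Γ] = (Γ → ℤ)`. -/
def shiftHom (g : Γ) : (Γ → ℤ) →+ (Γ → ℤ) where
  toFun f := fun h => f (g⁻¹ * h)
  map_zero' := rfl
  map_add' _ _ := rfl

instance : DistribMulAction Γ (JLat Γ) where
  smul g := fun x => QuotientAddGroup.map _ _ (shiftHom g)
    (by rintro f ⟨n, rfl⟩; exact ⟨n, rfl⟩) x
  one_smul := by
    intro x
    refine QuotientAddGroup.induction_on x fun f => ?_
    show QuotientAddGroup.map _ _ _ _ _ = _
    rw [QuotientAddGroup.map_mk]
    congr 1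
    funext h
    simp [shiftHom]
  mul_smul := by
    intro g g' x
    refine QuotientAddGroup.induction_on x fun f => ?_
    show QuotientAddGroup.map _ _ _ _ _ =
      QuotientAddGroup.map _ _ _ _ (QuotientAddGroup.map _ _ _ _ _)
    rw [QuotientAddGroup.map_mk, QuotientAddGroup.map_mk, QuotientAddGroup.map_mk]
    congr 1
    funext h
    simp [shiftHom, mul_assoc]
  smul_zero := by
    intro g
    exact map_zero (QuotientAddGroup.map _ _ (shiftHom g)
      (by rintro f ⟨n, rfl⟩; exact ⟨n, rfl⟩))
  smul_add := by
    intro g x y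
    exact map_add (QuotientAddGroup.map _ _ (shiftHom g)
      (by rintro f ⟨n, rfl⟩; exact ⟨n, rfl⟩)) x y

end JGamma


section Aux

open Finset

/-- Norm relation for pointwise 1-cocycles. -/
lemma norm1_pointwise {H ι β : Type} [Group H] [Fintype H] [AddCommGroup β]
    (act : H → ι → ι)
    (δ : H → ι → β) (hδ : ∀ a b x, δ (a * b) x = δ b (act a⁻¹ x) + δ a x)
    (a : H) (x : ι) :
    (Fintype.card H) • δ a x = (∑ b : H, δ b x) - ∑ b : H, δ b (act a⁻¹ x) := by
  have h1 : ∑ b : H, δ (a * b) x = ∑ b : H, δ b x :=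
    Fintype.sum_bijective (fun b => a * b) (Group.mulLeft_bijective a) _ _ (fun b => rfl)
  have h2 : ∑ b : H, δ (a * b) x
      = (∑ b : H, δ b (act a⁻¹ x)) + (Fintype.card H) • δ a x := by
    simp only [hδ]
    rw [Finset.sum_add_distrib, Finset.sum_const, Finset.card_univ]
  rw [h1] at h2
  rw [h2]; abel

/-- Norm relation for pointwise 2-cocycles. -/
lemma norm2_pointwise {H ι β : Type} [Group H] [Fintype H] [AddCommGroup β]
    (act : H → ι → ι)
    (c : H → H → ι → β)
    (hc : ∀ g h k x, c h k (act g⁻¹ x) + c g (h * k) x = c (g * h) k x + c g h x)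
    (g h : H) (x : ι) :
    (Fintype.card H) • c g h x =
      (∑ k : H, c h k (act g⁻¹ x)) + (∑ k : H, c g k x) - ∑ k : H, c (g * h) k x := by
  have h1 : ∑ k : H, c g (h * k) x = ∑ k : H, c g k x :=
    Fintype.sum_bijective (fun k => h * k) (Group.mulLeft_bijective h) _ _ (fun k => rfl)
  have h2 : ∑ k : H, (c h k (act g⁻¹ x) + c g (h * k) x)
      = ∑ k : H, (c (g * h) k x + c g h x) :=
    Finset.sum_congr rfl (fun k _ => hc g h k x)
  rw [Finset.sum_add_distrib, Finset.sum_add_distrib, h1, Finset.sum_const,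
    Finset.card_univ] at h2
  rw [h2]; abel

/-- Orbit representatives for a group action. -/
lemma exists_reps {G ι : Type} [Group G] [MulAction G ι] :
    ∃ (rep : ι → ι) (a : ι → G),
      (∀ x, (a x)⁻¹ • x = rep x) ∧ ∀ (s : G) (x : ι), rep (s • x) = rep x := by
  classical
  refine ⟨fun x => (Quotient.mk (MulAction.orbitRel G ι) x).out, ?_⟩
  have hrel : ∀ x : ι, (Quotient.mk (MulAction.orbitRel G ι) x).out ∈ MulAction.orbit G x := by
    intro x
    have h : Quotient.mk (MulAction.orbitRel G ι)
        ((Quotient.mk (MulAction.orbitRel G ι) x).out) = Quotient.mk _ x := Quotient.out_eq _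
    exact (MulAction.orbitRel_apply).mp (Quotient.exact h)
  choose a ha using fun x => MulAction.mem_orbit_iff.mp (hrel x)
  refine ⟨fun x => (a x)⁻¹, fun x => by rw [inv_inv]; exact ha x, fun s x => ?_⟩
  have : Quotient.mk (MulAction.orbitRel G ι) (s • x) = Quotient.mk _ x :=
    Quotient.sound (MulAction.mem_orbit x s)
  exact congrArg Quotient.out this

/-- Coordinates of a smul w.r.t. a permuted basis. -/
lemma equivFun_smul {G M ι : Type} [Group G] [AddCommGroup M] [DistribMulAction G M]
    [Fintype ι] (b : Module.Basis ι ℤ M) (σ : G → ι → ι)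
    (hσ : ∀ s i, s • b i = b (σ s i))
    (hmul : ∀ s t i, σ (s * t) i = σ s (σ t i))
    (hone : ∀ i, σ 1 i = i)
    (s : G) (m : M) (k : ι) :
    b.equivFun (s • m) k = b.equivFun m (σ s⁻¹ k) := by
  classical
  have hinv1 : ∀ i, σ s (σ s⁻¹ i) = i := fun i => by
    rw [← hmul, mul_inv_cancel, hone]
  have hinv2 : ∀ i, σ s⁻¹ (σ s i) = i := fun i => by
    rw [← hmul, inv_mul_cancel, hone]
  have hm : s • m = b.equivFun.symm (fun i => b.equivFun m (σ s⁻¹ i)) := by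
    conv_lhs => rw [← b.sum_equivFun m]
    rw [Module.Basis.equivFun_symm_apply]
    rw [Finset.smul_sum]
    have step : ∀ j : ι, s • (b.equivFun m j • b j)
        = b.equivFun m j • b (σ s j) := by
      intro j
      rw [smul_comm, hσ]
    rw [Finset.sum_congr rfl (fun j _ => step j)]
    refine Fintype.sum_bijective (σ s) ⟨fun i j h => ?_, fun j => ⟨σ s⁻¹ j, hinv1 j⟩⟩ _ _
      (fun j => ?_)
    · have := congrArg (σ s⁻¹) h; rwa [hinv2, hinv2] at this
    · rw [hinv2]
  rw [hm, LinearEquiv.apply_symm_apply]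

/-- `H¹(G, P) = 0` for a permutation lattice `P`. -/
lemma h1_perm {G M ι : Type} [Group G] [Finite G] [AddCommGroup M] [DistribMulAction G M]
    [Fintype ι] (b : Module.Basis ι ℤ M)
    (hb : ∀ (s : G) (i : ι), ∃ j, s • b i = b j) :
    ∀ φ : G → M, (∀ s t, φ (s * t) = s • φ t + φ s) → ∃ m, ∀ s, φ s = s • m - m := by
  classical
  have : Fintype G := Fintype.ofFinite G
  choose σ hσ using hb
  have binj := b.injective
  have hmul : ∀ s t i, σ (s * t) i = σ s (σ t i) := fun s t i =>
    binj (by rw [← hσ, ← hσ, ← hσ, mul_smul])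
  have hone : ∀ i, σ 1 i = i := fun i => binj (by rw [← hσ, one_smul])
  have hcoord := equivFun_smul b σ hσ hmul hone
  intro φ hφ
  set n := Fintype.card G with hn
  have npos : 0 < n := Fintype.card_pos
  have nz : (n : ℤ) ≠ 0 := Int.natCast_ne_zero.mpr npos.ne'
  -- coordinates
  have hFc : ∀ s t x, b.equivFun (φ (s * t)) x
      = b.equivFun (φ t) (σ s⁻¹ x) + b.equivFun (φ s) x := by
    intro s t x
    rw [hφ s t, map_add]
    simp only [Pi.add_apply]
    rw [hcoord]
  set F : G → ι → ℤ := fun s => b.equivFun (φ s) with hF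
  have hFc' : ∀ s t x, F (s * t) x = F t (σ s⁻¹ x) + F s x := hFc
  letI : SMul G ι := ⟨σ⟩
  letI : MulAction G ι :=
    { one_smul := fun i => hone i
      mul_smul := fun s t i => hmul s t i }
  obtain ⟨rep, arep, harep, hrepinv⟩ := exists_reps (G := G) (ι := ι)
  have hnorm := fun (a : G) (x : ι) => norm1_pointwise σ F hFc' a x
  set Nf : ι → ℤ := fun x => ∑ s : G, F s x with hNf
  have hnorm' : ∀ (a : G) (x : ι), (n : ℤ) * F a x = Nf x - Nf (σ a⁻¹ x) := by
    intro a x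
    rw [← nsmul_eq_mul]
    exact hnorm a x
  have harep' : ∀ x, σ (arep x)⁻¹ x = rep x := harep
  have hrepinv' : ∀ (s : G) x, rep (σ s x) = rep x := hrepinv
  have hdvd : ∀ x, (n : ℤ) ∣ Nf x - Nf (rep x) := by
    intro x
    refine ⟨F (arep x) x, ?_⟩
    rw [← harep' x]
    exact (hnorm' (arep x) x).symm
  set ψ : ι → ℤ := fun x => (Nf x - Nf (rep x)) / (n : ℤ) with hψdef
  have hψ : ∀ x, (n : ℤ) * ψ x = Nf x - Nf (rep x) := fun x =>
    Int.mul_ediv_cancel' (hdvd x)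
  have key : ∀ s x, F s x = -ψ (σ s⁻¹ x) + ψ x := by
    intro s x
    have h1 := hnorm' s x
    have h2 := hψ (σ s⁻¹ x)
    have h3 := hψ x
    have h4 : rep (σ s⁻¹ x) = rep x := hrepinv' s⁻¹ x
    rw [h4] at h2
    apply mul_left_cancel₀ nz
    rw [mul_add, mul_neg, h1, h2, h3]
    ring
  refine ⟨b.equivFun.symm (fun x => -ψ x), fun s => ?_⟩
  apply b.equivFun.injective
  funext x
  rw [map_sub]
  simp only [Pi.sub_apply]
  rw [hcoord]
  simp only [LinearEquiv.apply_symm_apply]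
  show F s x = -ψ (σ s⁻¹ x) - -ψ x
  rw [key s x]
  ring

/-- `Ш²(G, P) = 0` for a permutation lattice `P`. -/
lemma sha2_perm {G M ι : Type} [Group G] [Finite G] [AddCommGroup M] [DistribMulAction G M]
    [Fintype ι] (b : Module.Basis ι ℤ M)
    (hb : ∀ (s : G) (i : ι), ∃ j, s • b i = b j) :
    ∀ c : G → G → M, IsCocycle2 G M c →
      (∀ C : Subgroup G, IsCyclic C → IsCoboundary2 C M (fun a b' : C => c a b')) →
      IsCoboundary2 G M c := by
  classical
  have : Fintype G := Fintype.ofFinite G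
  choose σ hσ using hb
  have binj := b.injective
  have hmul : ∀ s t i, σ (s * t) i = σ s (σ t i) := fun s t i =>
    binj (by rw [← hσ, ← hσ, ← hσ, mul_smul])
  have hone : ∀ i, σ 1 i = i := fun i => binj (by rw [← hσ, one_smul])
  have hcoord := equivFun_smul b σ hσ hmul hone
  have hinv1 : ∀ (s : G) i, σ s (σ s⁻¹ i) = i := fun s i => by
    rw [← hmul, mul_inv_cancel, hone]
  have hinv2 : ∀ (s : G) i, σ s⁻¹ (σ s i) = i := fun s i => by
    rw [← hmul, inv_mul_cancel, hone]
  intro c hc hloc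
  set n := Fintype.card G with hn
  have npos : 0 < n := Fintype.card_pos
  have nzq : ((n : ℤ) : ℚ) ≠ 0 := by
    exact_mod_cast (Int.natCast_ne_zero.mpr npos.ne' : (n : ℤ) ≠ 0)
  set F : G → G → ι → ℤ := fun s t => b.equivFun (c s t) with hF
  have hFc : ∀ g h k x, F h k (σ g⁻¹ x) + F g (h * k) x = F (g * h) k x + F g h x := by
    intro g h k x
    have := congrArg (fun m => b.equivFun m x) (hc g h k)
    simp only [map_add, Pi.add_apply] at this
    rw [hcoord] at this
    exact this
  set Nc : G → ι → ℤ := fun g x => ∑ k : G, F g k x with hNc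
  set Φ : G → ι → ℚ := fun g x => ((Nc g x : ℤ) : ℚ) / ((n : ℤ) : ℚ) with hΦ
  have hdΦ : ∀ g h x, ((F g h x : ℤ) : ℚ) = Φ h (σ g⁻¹ x) + Φ g x - Φ (g * h) x := by
    intro g h x
    have h1 : (n : ℤ) * F g h x = Nc h (σ g⁻¹ x) + Nc g x - Nc (g * h) x := by
      rw [← nsmul_eq_mul]
      exact norm2_pointwise σ F hFc g h x
    have h2 : ((n : ℤ) : ℚ) * ((F g h x : ℤ) : ℚ)
        = ((Nc h (σ g⁻¹ x) : ℤ) : ℚ) + ((Nc g x : ℤ) : ℚ) - ((Nc (g * h) x : ℤ) : ℚ) := by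
      exact_mod_cast congrArg (fun z : ℤ => (z : ℚ)) h1
    have h3 : Φ h (σ g⁻¹ x) + Φ g x - Φ (g * h) x
        = (((Nc h (σ g⁻¹ x) : ℤ) : ℚ) + ((Nc g x : ℤ) : ℚ) - ((Nc (g * h) x : ℤ) : ℚ))
          / ((n : ℤ) : ℚ) := by
      simp only [hΦ]; ring
    rw [h3, ← h2, mul_comm, mul_div_assoc, div_self nzq, mul_one]
  have hmodZ : ∀ g h x, ∃ k : ℤ, Φ (g * h) x - Φ h (σ g⁻¹ x) - Φ g x = (k : ℚ) := by
    intro g h x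
    exact ⟨-F g h x, by have := hdΦ g h x; push_cast; linarith⟩
  -- stabilizer integrality
  have hstab : ∀ (t : G) (y : ι), σ t y = y → ∃ k : ℤ, Φ t y = (k : ℚ) := by
    intro t y hty
    have hCc : IsCyclic (Subgroup.zpowers t) :=
      ⟨⟨⟨t, Subgroup.mem_zpowers t⟩, by rintro ⟨x, k, rfl⟩; exact ⟨k, by ext; simp⟩⟩⟩
    obtain ⟨ρ, hρ⟩ := hloc (Subgroup.zpowers t) hCc
    haveI : Fintype (Subgroup.zpowers t) := Fintype.ofFinite _
    set m := Fintype.card (Subgroup.zpowers t) with hm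
    have mpos : 0 < m := Fintype.card_pos
    have mzq : ((m : ℚ)) ≠ 0 := by exact_mod_cast mpos.ne'
    set R : (Subgroup.zpowers t) → ι → ℤ := fun a => b.equivFun (ρ a) with hR
    set δ : (Subgroup.zpowers t) → ι → ℚ := fun a x => Φ (↑a) x - ((R a x : ℤ) : ℚ)
      with hδ
    have hδc : ∀ (a a' : Subgroup.zpowers t) (x : ι),
        δ (a * a') x = δ a' (σ (↑a : G)⁻¹ x) + δ a x := by
      intro a a' x
      have h1 : F (↑a) (↑a') x = R a' (σ (↑a : G)⁻¹ x) + R a x - R (a * a') x := by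
        have := congrArg (fun mm => b.equivFun mm x) (hρ a a')
        simp only [map_add, map_sub, Pi.add_apply, Pi.sub_apply] at this
        have hsm : b.equivFun (a • ρ a') x = b.equivFun (ρ a') (σ (↑a : G)⁻¹ x) := by
          show b.equivFun ((↑a : G) • ρ a') x = _
          rw [hcoord]
        rw [hsm] at this
        exact this
      have h1q : ((F (↑a) (↑a') x : ℤ) : ℚ)
          = ((R a' (σ (↑a : G)⁻¹ x) : ℤ) : ℚ) + ((R a x : ℤ) : ℚ)
            - ((R (a * a') x : ℤ) : ℚ) := by exact_mod_cast congrArg (fun z : ℤ => (z : ℚ)) h1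
      have h2 := hdΦ (↑a) (↑a') x
      simp only [hδ, Subgroup.coe_mul]
      linarith [h1q, h2]
    have hnorm1 := norm1_pointwise (fun (a : Subgroup.zpowers t) => σ (↑a : G)) δ
      (by intro a a' x; exact hδc a a' x) ⟨t, Subgroup.mem_zpowers t⟩ y
    have hty' : σ t⁻¹ y = y := by
      conv_lhs => rw [← hty]
      exact hinv2 t y
    have hcoe : ((⟨t, Subgroup.mem_zpowers t⟩ : Subgroup.zpowers t)⁻¹ : Subgroup.zpowers t)
        = ⟨t⁻¹, inv_mem (Subgroup.mem_zpowers t)⟩ := rfl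
    rw [hcoe] at hnorm1
    have hzero : (m : ℚ) * δ ⟨t, Subgroup.mem_zpowers t⟩ y = 0 := by
      rw [← nsmul_eq_mul, hnorm1]
      show (∑ b_1 : Subgroup.zpowers t, δ b_1 y) - ∑ b_1 : Subgroup.zpowers t, δ b_1 (σ t⁻¹ y) = 0
      rw [hty', sub_self]
    have hδ0 : δ ⟨t, Subgroup.mem_zpowers t⟩ y = 0 := by
      rcases mul_eq_zero.mp hzero with h | h
      · exact absurd h mzq
      · exact h
    refine ⟨R ⟨t, Subgroup.mem_zpowers t⟩ y, ?_⟩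
    have : Φ t y - ((R ⟨t, Subgroup.mem_zpowers t⟩ y : ℤ) : ℚ) = 0 := hδ0
    linarith [this]
  -- orbit representatives
  letI : SMul G ι := ⟨σ⟩
  letI : MulAction G ι :=
    { one_smul := fun i => hone i
      mul_smul := fun s t i => hmul s t i }
  obtain ⟨rep, arep, harep, hrepinv⟩ := exists_reps (G := G) (ι := ι)
  have harep' : ∀ x, σ (arep x)⁻¹ x = rep x := harep
  have hrepinv' : ∀ (s : G) x, rep (σ s x) = rep x := hrepinv
  set ψ : ι → ℚ := fun x => -Φ (arep x) x with hψ
  have hθint : ∀ s x, ∃ k : ℤ, Φ s x - ψ (σ s⁻¹ x) + ψ x = (k : ℚ) := by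
    intro s x
    obtain ⟨k1, hk1⟩ := hmodZ s (arep (σ s⁻¹ x)) x
    set a := arep x with ha
    set bb := s * arep (σ s⁻¹ x) with hbb
    set tt := a⁻¹ * bb with htt
    obtain ⟨k2, hk2⟩ := hmodZ a tt x
    have habb : a * tt = bb := by rw [htt, mul_inv_cancel_left]
    have hax : σ a⁻¹ x = rep x := harep' x
    have hbbrep : σ bb (rep x) = x := by
      have h1 : σ bb⁻¹ x = rep x := by
        rw [hbb, mul_inv_rev, hmul, harep', hrepinv']
      rw [← h1, hinv1]
    have hfix : σ tt (rep x) = rep x := by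
      rw [htt, hmul, hbbrep, hax]
    obtain ⟨k3, hk3⟩ := hstab tt (rep x) hfix
    refine ⟨k2 + k3 - k1, ?_⟩
    rw [habb] at hk2
    rw [hax] at hk2
    rw [hk3] at hk2
    have e1 : ψ (σ s⁻¹ x) = -Φ (arep (σ s⁻¹ x)) (σ s⁻¹ x) := rfl
    have e2 : ψ x = -Φ a x := rfl
    rw [e1, e2]
    push_cast
    push_cast at hk1 hk2
    linarith [hk1, hk2]
  choose θ hθ using hθint
  refine ⟨fun s => b.equivFun.symm (θ s), ?_⟩
  intro g h
  apply b.equivFun.injective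
  funext x
  rw [map_sub, map_add]
  simp only [Pi.add_apply, Pi.sub_apply]
  rw [hcoord]
  simp only [LinearEquiv.apply_symm_apply]
  have goalQ : ((F g h x : ℤ) : ℚ)
      = ((θ h (σ g⁻¹ x) : ℤ) : ℚ) + ((θ g x : ℤ) : ℚ) - ((θ (g * h) x : ℤ) : ℚ) := by
    rw [← hθ, ← hθ, ← hθ, hdΦ g h x]
    have hcomp : σ (g * h)⁻¹ x = σ h⁻¹ (σ g⁻¹ x) := by rw [mul_inv_rev, hmul]
    rw [hcomp]
    ring
  have : F g h x = θ h (σ g⁻¹ x) + θ g x - θ (g * h) x := by exact_mod_cast goalQ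
  exact this

/-- Transfer of Ш²-triviality to a direct summand. -/
lemma shaTriv_of_summand {G M N : Type} [Group G]
    [AddCommGroup M] [DistribMulAction G M] [AddCommGroup N] [DistribMulAction G N]
    (i : M →+ N) (r : N →+ M)
    (hi : ∀ (s : G) (x : M), i (s • x) = s • i x)
    (hr : ∀ (s : G) (y : N), r (s • y) = s • r y)
    (hri : ∀ x, r (i x) = x)
    (hN : ∀ c : G → G → N, IsCocycle2 G N c →
      (∀ C : Subgroup G, IsCyclic C → IsCoboundary2 C N (fun a b : C => c a b)) →
      IsCoboundary2 G N c) :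
    ∀ c : G → G → M, IsCocycle2 G M c →
      (∀ C : Subgroup G, IsCyclic C → IsCoboundary2 C M (fun a b : C => c a b)) →
      IsCoboundary2 G M c := by
  intro c hc hloc
  have hcoc : IsCocycle2 G N (fun s t => i (c s t)) := by
    intro g h k
    rw [← hi, ← map_add, hc g h k, map_add]
  have hlocN : ∀ C : Subgroup G, IsCyclic C →
      IsCoboundary2 C N (fun a b : C => i (c a b)) := by
    intro C hC
    obtain ⟨ρ, hρ⟩ := hloc C hC
    refine ⟨fun a => i (ρ a), fun a b' => ?_⟩
    show i (c (↑a) (↑b')) = a • i (ρ b') + i (ρ a) - i (ρ (a * b'))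
    have h1 : c (↑a) (↑b') = a • ρ b' + ρ a - ρ (a * b') := hρ a b'
    rw [h1, map_sub, map_add]
    have h2 : i (a • ρ b') = a • i (ρ b') := hi (↑a : G) (ρ b')
    rw [h2]
  obtain ⟨ψ, hψ⟩ := hN _ hcoc hlocN
  refine ⟨fun s => r (ψ s), fun g h => ?_⟩
  have := congrArg r (hψ g h)
  rw [hri] at this
  rw [this, map_sub, map_add, hr]

/-- Transfer of Ш²-triviality along a short exact sequence with `H¹`-trivial cokernel. -/
lemma shaTriv_of_ses {G Q P P' : Type} [Group G]
    [AddCommGroup Q] [DistribMulAction G Q] [AddCommGroup P] [DistribMulAction G P]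
    [AddCommGroup P'] [DistribMulAction G P']
    (j : Q →+ P) (g0 : P →+ P')
    (hj : ∀ (s : G) (x : Q), j (s • x) = s • j x)
    (hg : ∀ (s : G) (y : P), g0 (s • y) = s • g0 y)
    (hinj : Function.Injective j) (hsurj : Function.Surjective g0)
    (hker : ∀ y, g0 y = 0 ↔ y ∈ Set.range j)
    (hP : ∀ c : G → G → P, IsCocycle2 G P c →
      (∀ C : Subgroup G, IsCyclic C → IsCoboundary2 C P (fun a b : C => c a b)) →
      IsCoboundary2 G P c)
    (hP' : ∀ φ : G → P', (∀ s t, φ (s * t) = s • φ t + φ s) → ∃ m, ∀ s, φ s = s • m - m) :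
    ∀ c : G → G → Q, IsCocycle2 G Q c →
      (∀ C : Subgroup G, IsCyclic C → IsCoboundary2 C Q (fun a b : C => c a b)) →
      IsCoboundary2 G Q c := by
  intro c hc hloc
  have hcoc : IsCocycle2 G P (fun s t => j (c s t)) := by
    intro g h k
    rw [← hj, ← map_add, hc g h k, map_add]
  have hlocP : ∀ C : Subgroup G, IsCyclic C →
      IsCoboundary2 C P (fun a b : C => j (c a b)) := by
    intro C hC
    obtain ⟨ρ, hρ⟩ := hloc C hC
    refine ⟨fun a => j (ρ a), fun a b' => ?_⟩
    show j (c (↑a) (↑b')) = a • j (ρ b') + j (ρ a) - j (ρ (a * b'))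
    have h1 : c (↑a) (↑b') = a • ρ b' + ρ a - ρ (a * b') := hρ a b'
    rw [h1, map_sub, map_add]
    have h2 : j (a • ρ b') = a • j (ρ b') := hj (↑a : G) (ρ b')
    rw [h2]
  obtain ⟨φ, hφ⟩ := hP _ hcoc hlocP
  -- hφ : j (c g h) = g • φ h + φ g - φ (g * h)
  have hco : ∀ s t, g0 (φ (s * t)) = s • g0 (φ t) + g0 (φ s) := by
    intro s t
    have h0 : g0 (j (c s t)) = 0 := (hker _).mpr ⟨c s t, rfl⟩
    have := congrArg g0 (hφ s t)
    rw [h0, map_sub, map_add, hg] at this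
    have := sub_eq_zero.mp this.symm
    rw [← this]
  obtain ⟨p', hp'⟩ := hP' (fun s => g0 (φ s)) hco
  obtain ⟨p, hp⟩ := hsurj p'
  set φ₂ : G → P := fun s => φ s - (s • p - p) with hφ₂
  have hgφ₂ : ∀ s, g0 (φ₂ s) = 0 := by
    intro s
    simp only [hφ₂]
    rw [map_sub, map_sub, hg, hp, hp' s]
    abel
  have hrange : ∀ s, ∃ q, j q = φ₂ s := fun s => (hker _).mp (hgφ₂ s)
  choose q hq using hrange
  refine ⟨q, fun g h => ?_⟩
  apply hinj
  have e1 : j (g • q h + q g - q (g * h))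
      = g • φ₂ h + φ₂ g - φ₂ (g * h) := by
    rw [map_sub, map_add, hj, hq, hq, hq]
  rw [e1]
  have e2 : g • φ₂ h + φ₂ g - φ₂ (g * h) = g • φ h + φ g - φ (g * h) := by
    simp only [hφ₂, smul_sub, mul_smul]
    abel
  rw [e2, ← hφ g h]

end Aux


/-- If a `Γ`-lattice `L` is quasi-invertible, then the
Tate–Shafarevich group `Ш²(Γ', L)` vanishes for every subgroup `Γ'` of `Γ`. -/
theorem sha2_eq_zero_of_quasiInvertible
    (Γ : Type) [Group Γ] [Finite Γ]
    (L : Type) [AddCommGroup L] [DistribMulAction Γ L]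
    [Module.Free ℤ L] [Module.Finite ℤ L]
    (h : IsQuasiInvertible (Γ := Γ) ⟨L⟩) :
    ∀ (Γ' : Subgroup Γ) (x : Sha2 Γ' L), x = 0 := by
  obtain ⟨Q, ⟨P, P', hPperm, hP'perm, f, g, hf, hg, hinjf, hsurjg, hkerg⟩,
    i, r, hi, hr, hri⟩ := h
  intro Γ' x
  refine QuotientAddGroup.induction_on x fun fc => ?_
  rw [QuotientAddGroup.eq_zero_iff, AddSubgroup.mem_addSubgroupOf]
  obtain ⟨hc, hloc⟩ := fc.2
  obtain ⟨ι, fι, bP, hbP⟩ := hPperm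
  obtain ⟨ι', fι', bP', hbP'⟩ := hP'perm
  haveI := fι
  haveI := fι'
  have hshaP := sha2_perm (G := ↥Γ') bP (fun s i0 => hbP (↑s) i0)
  have hH1P' := h1_perm (G := ↥Γ') bP' (fun s i0 => hbP' (↑s) i0)
  have hshaQ := shaTriv_of_ses (G := ↥Γ') f g (fun s x0 => hf (↑s) x0)
    (fun s y0 => hg (↑s) y0) hinjf hsurjg hkerg hshaP hH1P'
  have hshaL := shaTriv_of_summand (G := ↥Γ') i r (fun s x0 => hi (↑s) x0)
    (fun s y0 => hr (↑s) y0) (fun x0 => DFunLike.congr_fun hri x0) hshaQ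
  exact hshaL fc hc hloc
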